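/- Let X be a metric space. A sequence (c_n) of generalized geodesics converges to a generalized geodesic c with respect to the metric d_FS if and only if c_n → c uniformly on compact subsets of ℝ. -/

import Mathlib

open Metric Real MeasureTheory Set

variable {X : Type*}

/-- Witness data for a generalized geodesic: `c` is locally constant outside the
interval `(a, b)` and restricts to an isometric embedding on `[a, b]`. -/
def GenGeodesicWitness [MetricSpace X] (c : ℝ → X) (a b : EReal) : Prop :=
  a ≤ b ∧ a ≠ ⊤ ∧ b ≠ ⊥ ∧
    (∀ s t : ℝ, (s : EReal) ≤ a → (t : EReal) ≤ a → c s = c t) ∧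
    (∀ s t : ℝ, b ≤ (s : EReal) → b ≤ (t : EReal) → c s = c t) ∧
    (∀ s t : ℝ, a ≤ (s : EReal) → (s : EReal) ≤ b → a ≤ (t : EReal) → (t : EReal) ≤ b →
      dist (c s) (c t) = |s - t|)

/-- A generalized geodesic in a metric space. -/
def IsGenGeodesic [MetricSpace X] (c : ℝ → X) : Prop := ∃ a b : EReal, GenGeodesicWitness c a b

/-- The metric of the flow space `FS(X)`. -/
noncomputable def fsDist [MetricSpace X] (c d : ℝ → X) : ℝ :=
  ∫ t : ℝ, dist (c t) (d t) / (2 * Real.exp |t|)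

lemma IsGenGeodesic.dist_le [MetricSpace X] {c : ℝ → X} (h : IsGenGeodesic c) (s t : ℝ) :
    dist (c s) (c t) ≤ |s - t| := by
  obtain ⟨a, b, hab, ha, hb, hca, hcb, hiso⟩ := h
  wlog hst : s ≤ t generalizing s t
  · rw [dist_comm, abs_sub_comm]; exact this t s (by linarith)
  by_cases hta : (t : EReal) ≤ a
  · rw [hca s t ((EReal.coe_le_coe_iff.mpr hst).trans hta) hta, dist_self]; positivity
  by_cases hbs : b ≤ (s : EReal)
  · rw [hcb s t hbs (hbs.trans (EReal.coe_le_coe_iff.mpr hst)), dist_self]; positivity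
  push_neg at hta hbs
  set s' : ℝ := if (s : EReal) ≤ a then a.toReal else s with hs'
  set t' : ℝ := if b ≤ (t : EReal) then b.toReal else t with ht'
  have hane : ((s : EReal) ≤ a) → (a.toReal : EReal) = a := fun hsa =>
    EReal.coe_toReal ha (fun habs => by simp [habs] at hsa)
  have hbne : (b ≤ (t : EReal)) → (b.toReal : EReal) = b := fun hbt =>
    EReal.coe_toReal (fun habs => by simp [habs] at hbt) hb
  have hcs : c s = c s' := by
    rw [hs']; split_ifs with h1
    · exact hca s a.toReal h1 (le_of_eq (hane h1))
    · rfl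
  have hct : c t = c t' := by
    rw [ht']; split_ifs with h1
    · exact hcb t b.toReal h1 (le_of_eq (hbne h1).symm)
    · rfl
  have has' : a ≤ (s' : EReal) := by
    rw [hs']; split_ifs with h1
    · exact le_of_eq (hane h1).symm
    · push_neg at h1; exact h1.le
  have hs'b : (s' : EReal) ≤ b := by
    rw [hs']; split_ifs with h1
    · exact (hane h1).le.trans hab
    · exact hbs.le
  have hat' : a ≤ (t' : EReal) := by
    rw [ht']; split_ifs with h1
    · exact hab.trans (hbne h1).ge
    · exact hta.le
  have ht'b : (t' : EReal) ≤ b := by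
    rw [ht']; split_ifs with h1
    · exact (hbne h1).le
    · exact (not_le.mp h1).le
  have hss' : s ≤ s' := by
    rw [hs']; split_ifs with h1
    · exact EReal.coe_le_coe_iff.mp ((hane h1).symm ▸ h1)
    · exact le_rfl
  have htt' : t' ≤ t := by
    rw [ht']; split_ifs with h1
    · exact EReal.coe_le_coe_iff.mp ((hbne h1).symm ▸ h1)
    · exact le_rfl
  have hst' : s' ≤ t' := EReal.coe_le_coe_iff.mp (by
    rw [hs', ht']; split_ifs with h1 h2 h2
    · exact (hane h1).le.trans (hab.trans (hbne h2).ge)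
    · exact (hane h1).le.trans hta.le
    · exact hbs.le.trans (hbne h2).ge
    · exact EReal.coe_le_coe_iff.mpr hst)
  calc dist (c s) (c t) = |s' - t'| := by rw [hcs, hct, hiso s' t' has' hs'b hat' ht'b]
    _ ≤ |s - t| := by rw [abs_sub_comm, abs_of_nonneg (by linarith), abs_sub_comm s,
        abs_of_nonneg (by linarith)]; linarith

lemma IsGenGeodesic.continuous [MetricSpace X] {c : ℝ → X} (h : IsGenGeodesic c) :
    Continuous c :=
  (LipschitzWith.of_dist_le_mul (fun s t => by
    simpa [Real.dist_eq] using h.dist_le s t) : LipschitzWith 1 c).continuous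

lemma integrable_bound (M : ℝ) :
    Integrable (fun t : ℝ => (M + 2 * |t|) * Real.exp (-|t|)) := by
  have hcont : Continuous (fun t : ℝ => (M + 2 * |t|) * Real.exp (-|t|)) := by
    have : Continuous (fun t : ℝ => |t|) := continuous_abs
    continuity
  have hIoi : IntegrableOn (fun t : ℝ => (M + 2 * |t|) * Real.exp (-|t|)) (Ioi 0) := by
    apply integrable_of_isBigO_exp_neg (one_half_pos) hcont.continuousOn
    have heq : (fun t : ℝ => (M + 2 * |t|) * Real.exp (-|t|))
        =ᶠ[Filter.atTop] fun t => (M + 2 * t) * Real.exp (-t) := by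
      filter_upwards [Filter.eventually_ge_atTop (0 : ℝ)] with t ht
      rw [abs_of_nonneg ht]
    refine heq.trans_isBigO ?_
    have hlo : (fun t : ℝ => (M + 2 * t) * Real.exp (-t))
        =o[Filter.atTop] fun t => Real.exp (-(1/2) * t) := by
      rw [Asymptotics.isLittleO_iff_tendsto (fun x hx => absurd hx (Real.exp_ne_zero _))]
      have h1 : Filter.Tendsto (fun t : ℝ => t * Real.exp (-(1/2) * t))
          Filter.atTop (nhds 0) := by
        simpa [Real.rpow_one] using
          tendsto_rpow_mul_exp_neg_mul_atTop_nhds_zero 1 (1/2) one_half_pos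
      have h0 : Filter.Tendsto (fun t : ℝ => Real.exp (-(1/2) * t))
          Filter.atTop (nhds 0) := by
        simpa [Real.rpow_zero] using
          tendsto_rpow_mul_exp_neg_mul_atTop_nhds_zero 0 (1/2) one_half_pos
      have key : ∀ t : ℝ, (M + 2 * t) * Real.exp (-t) / Real.exp (-(1/2) * t)
          = M * Real.exp (-(1/2) * t) + 2 * (t * Real.exp (-(1/2) * t)) := by
        intro t
        rw [div_eq_iff (Real.exp_ne_zero _)]
        have : Real.exp (-t) = Real.exp (-(1/2) * t) * Real.exp (-(1/2) * t) := by
          rw [← Real.exp_add]; ring_nf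
        rw [this]; ring
      rw [funext key]
      simpa using ((tendsto_const_nhds.mul h0).add (h1.const_mul 2)).congr
        (fun t => by ring)
    exact hlo.isBigO
  rw [← integrableOn_univ, ← Iio_union_Ici (a := (0:ℝ)), integrableOn_union,
    integrableOn_Ici_iff_integrableOn_Ioi]
  refine ⟨?_, hIoi⟩
  rw [← (Measure.measurePreserving_neg (volume : Measure ℝ)).integrableOn_comp_preimage
      (Homeomorph.neg ℝ).measurableEmbedding]
  simpa [Function.comp_def, abs_neg] using hIoi

lemma fs_integrand_integrable [MetricSpace X] {c d : ℝ → X}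
    (hc : IsGenGeodesic c) (hd : IsGenGeodesic d) :
    Integrable (fun t : ℝ => dist (c t) (d t) / (2 * Real.exp |t|)) := by
  have hcont : Continuous (fun t : ℝ => dist (c t) (d t) / (2 * Real.exp |t|)) := by
    apply Continuous.div (hc.continuous.dist hd.continuous) (by continuity)
    intro t; positivity
  apply Integrable.mono' (((integrable_bound (dist (c 0) (d 0))).div_const 2))
    hcont.aestronglyMeasurable
  refine Filter.Eventually.of_forall fun t => ?_
  have hb : dist (c t) (d t) ≤ dist (c 0) (d 0) + 2 * |t| := by
    calc dist (c t) (d t) ≤ dist (c t) (c 0) + dist (c 0) (d 0) + dist (d 0) (d t) :=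
          dist_triangle4 _ _ _ _
      _ ≤ |t - 0| + dist (c 0) (d 0) + |(0:ℝ) - t| := by
          gcongr; exacts [hc.dist_le t 0, hd.dist_le 0 t]
      _ ≤ dist (c 0) (d 0) + 2 * |t| := by
          rw [sub_zero, zero_sub, abs_neg]; linarith
  have hpos : (0:ℝ) < 2 * Real.exp |t| := by positivity
  rw [Real.norm_eq_abs, abs_of_nonneg (by positivity)]
  rw [div_le_iff₀ hpos]
  have : (dist (c 0) (d 0) + 2 * |t|) * Real.exp (-|t|) / 2 * (2 * Real.exp |t|)
      = dist (c 0) (d 0) + 2 * |t| := by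
    rw [Real.exp_neg]
    rw [div_mul_eq_mul_div, mul_comm (2:ℝ) (Real.exp |t|), ← mul_assoc, mul_assoc _ (Real.exp |t|)⁻¹,
      inv_mul_cancel₀ (Real.exp_ne_zero _), mul_one, mul_comm, mul_div_assoc]
    rw [mul_div_cancel₀ _ (two_ne_zero)]
  rw [this]
  exact hb

lemma fs_integrand_le [MetricSpace X] {c d : ℝ → X}
    (hc : IsGenGeodesic c) (hd : IsGenGeodesic d) {M : ℝ} (hM : dist (c 0) (d 0) ≤ M) (t : ℝ) :
    dist (c t) (d t) / (2 * Real.exp |t|) ≤ (M + 2 * |t|) * Real.exp (-|t|) / 2 := by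
  have hb : dist (c t) (d t) ≤ M + 2 * |t| := by
    calc dist (c t) (d t) ≤ dist (c t) (c 0) + dist (c 0) (d 0) + dist (d 0) (d t) :=
          dist_triangle4 _ _ _ _
      _ ≤ |t - 0| + M + |(0:ℝ) - t| := by
          gcongr; exacts [hc.dist_le t 0, hd.dist_le 0 t]
      _ ≤ M + 2 * |t| := by rw [sub_zero, zero_sub, abs_neg]; linarith
  have hpos : (0:ℝ) < 2 * Real.exp |t| := by positivity
  rw [div_le_iff₀ hpos]
  have : (M + 2 * |t|) * Real.exp (-|t|) / 2 * (2 * Real.exp |t|) = M + 2 * |t| := by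
    rw [Real.exp_neg]
    rw [div_mul_eq_mul_div, mul_comm (2:ℝ) (Real.exp |t|), ← mul_assoc,
      mul_assoc _ (Real.exp |t|)⁻¹, inv_mul_cancel₀ (Real.exp_ne_zero _), mul_one,
      mul_comm, mul_div_assoc]
    rw [mul_div_cancel₀ _ (two_ne_zero)]
  rw [this]
  exact hb

/-- A sequence of generalized geodesics converges in the flow-space metric
`d_FS` if and only if it converges uniformly on compact subsets of `ℝ`. -/
theorem fsDist_tendsto_iff_locallyUniform [MetricSpace X]
    (cs : ℕ → ℝ → X) (c : ℝ → X)
    (hcs : ∀ n, IsGenGeodesic (cs n)) (hc : IsGenGeodesic c) :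
    (∀ K : Set ℝ, IsCompact K → TendstoUniformlyOn cs c Filter.atTop K) ↔
      Filter.Tendsto (fun n => fsDist (cs n) c) Filter.atTop (nhds 0) := by
  constructor
  · -- uniform convergence on compacts implies fsDist → 0
    intro h
    have hpt : ∀ t : ℝ, Filter.Tendsto (fun n => cs n t) Filter.atTop (nhds (c t)) := fun t =>
      (h {t} isCompact_singleton).tendsto_at (mem_singleton t)
    obtain ⟨M, hM⟩ :=
      (((hpt 0).dist (tendsto_const_nhds (x := c 0))).bddAbove_range :
        BddAbove (Set.range fun n => dist (cs n 0) (c 0)))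
    have hM' : ∀ n, dist (cs n 0) (c 0) ≤ M := fun n => hM (mem_range_self n)
    have key := MeasureTheory.tendsto_integral_of_dominated_convergence
      (μ := (volume : Measure ℝ))
      (F := fun n (t : ℝ) => dist (cs n t) (c t) / (2 * Real.exp |t|))
      (f := fun _ : ℝ => (0:ℝ))
      (bound := fun t : ℝ => (M + 2 * |t|) * Real.exp (-|t|) / 2)
      (fun n => (Continuous.div (((hcs n).continuous.dist hc.continuous)) (by continuity)
        (fun t => by positivity)).aestronglyMeasurable)
      ((integrable_bound M).div_const 2)
      (fun n => Filter.Eventually.of_forall fun t => by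
        rw [Real.norm_eq_abs, abs_of_nonneg (by positivity)]
        exact fs_integrand_le (hcs n) hc (hM' n) t)
      (Filter.Eventually.of_forall fun t => by
        have := ((hpt t).dist (tendsto_const_nhds (x := c t))).div_const (2 * Real.exp |t|)
        simpa using this)
    simpa [fsDist] using key
  · -- fsDist → 0 implies uniform convergence on compacts
    intro htend K hK
    obtain ⟨T, hT⟩ := hK.isBounded.subset_closedBall 0
    have hKT : K ⊆ Icc (-(max T 0)) (max T 0) := fun x hx => by
      have hx' := hT hx
      rw [Real.closedBall_eq_Icc, zero_sub, zero_add] at hx'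
      exact ⟨le_trans (by simp [neg_le_neg (le_max_left T 0)]) hx'.1,
        hx'.2.trans (le_max_left T 0)⟩
    set T' : ℝ := max T 0 with hT'
    have hT'0 : 0 ≤ T' := le_max_right T 0
    rw [Metric.tendstoUniformlyOn_iff]
    intro ε hε
    set η := min ε 1 with hηdef
    have hη0 : 0 < η := lt_min hε one_pos
    have hη1 : η ≤ 1 := min_le_right _ _
    have hηε : η ≤ ε := min_le_left _ _
    set δ := η ^ 2 / (16 * Real.exp (T' + 1)) with hδdef
    have hδ0 : 0 < δ := by positivity
    filter_upwards [htend.eventually_lt_const hδ0] with n hn t htK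
    by_contra hcon
    push_neg at hcon
    have hint := fs_integrand_integrable (hcs n) hc
    have htT : t ∈ Icc (-T') T' := hKT htK
    have hIcc : ∀ u ∈ Icc t (t + η / 4),
        η / 2 / (2 * Real.exp (T' + 1)) ≤ dist (cs n u) (c u) / (2 * Real.exp |u|) := by
      intro u hu
      have h1 : dist (c t) (c u) ≤ η / 4 := by
        refine (hc.dist_le t u).trans ?_
        rw [abs_sub_comm, abs_of_nonneg (by linarith [hu.1])]
        linarith [hu.2]
      have h2 : dist (cs n u) (cs n t) ≤ η / 4 := by
        refine ((hcs n).dist_le u t).trans ?_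
        rw [abs_of_nonneg (by linarith [hu.1])]
        linarith [hu.2]
      have hlow : η / 2 ≤ dist (cs n u) (c u) := by
        have htri : dist (c t) (cs n t) ≤
            dist (c t) (c u) + dist (c u) (cs n u) + dist (cs n u) (cs n t) :=
          dist_triangle4 _ _ _ _
        linarith [htri, hηε.trans hcon,
          (dist_comm (c u) (cs n u) : dist (c u) (cs n u) = dist (cs n u) (c u))]
      have habs : |u| ≤ T' + 1 := by
        rw [abs_le]
        constructor
        · linarith [htT.1, hu.1]
        · linarith [htT.2, hu.2, hη1]
      have hexple : Real.exp |u| ≤ Real.exp (T' + 1) := Real.exp_le_exp.mpr habs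
      exact div_le_div₀ (dist_nonneg) hlow (by positivity) (by linarith)
    have h1 : ∫ u in Icc t (t + η / 4), dist (cs n u) (c u) / (2 * Real.exp |u|)
        ≤ ∫ u, dist (cs n u) (c u) / (2 * Real.exp |u|) :=
      setIntegral_le_integral hint (Filter.Eventually.of_forall fun u => by positivity)
    have hvol : (volume (Icc t (t + η / 4))).toReal = η / 4 := by
      rw [Real.volume_Icc]
      rw [ENNReal.toReal_ofReal (by linarith)]
      ring
    have h2 : η / 2 / (2 * Real.exp (T' + 1)) * (volume (Icc t (t + η / 4))).toReal
        ≤ ∫ u in Icc t (t + η / 4), dist (cs n u) (c u) / (2 * Real.exp |u|) :=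
      setIntegral_ge_of_const_le_real measurableSet_Icc
        (by rw [Real.volume_Icc]; exact ENNReal.ofReal_ne_top) hIcc hint.integrableOn
    have hδle : δ ≤ fsDist (cs n) c := by
      have heq : η / 2 / (2 * Real.exp (T' + 1)) * (η / 4) = δ := by
        rw [hδdef]
        field_simp
        ring
      calc δ = η / 2 / (2 * Real.exp (T' + 1)) * (η / 4) := heq.symm
        _ = η / 2 / (2 * Real.exp (T' + 1)) * (volume (Icc t (t + η / 4))).toReal := by
            rw [hvol]
        _ ≤ ∫ u in Icc t (t + η / 4), dist (cs n u) (c u) / (2 * Real.exp |u|) := h2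
        _ ≤ ∫ u, dist (cs n u) (c u) / (2 * Real.exp |u|) := h1
        _ = fsDist (cs n) c := rfl
    exact absurd hn (not_lt.mpr hδle)
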